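/- Let q₀, q₁ be coprime positive integers, q = q₀q₁, F an integral quadratic form in s variables, n an integer, ℓ an integer, and r ∈ Z^s. Define K(ℓ,n,r;q) = Σ_{d ∈ (Z/qZ)^×} e((ℓd + n·d̄)/q) · G(-d̄, q; r), where G(c,q;r) = Σ_{h ∈ (Z/qZ)^s} e((c·F(h) + h·r)/q). Then K(ℓ,n,r;q) = K^{(q₁)}(ℓ,n,r;q₀) · K^{(q₀)}(ℓ,n,r;q₁), where K^{(q₁)}(ℓ,n,r;q₀) = Σ_{d₀ ∈ (Z/q₀Z)^×} e(q̄₁(ℓd₀ + n·d̄₀)/q₀) · G(-q̄₁·d̄₀, q₀; q̄₁·r) and symmetrically for K^{(q₀)}, with q̄₁ the inverse of q₁ mod q₀ and q̄₀ the inverse of q₀ mod q₁. -/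

import Mathlib

open scoped BigOperators

/-- `e x = e^{2πix}`. -/
noncomputable def e (x : ℝ) : ℂ := Complex.exp (2 * (Real.pi : ℂ) * Complex.I * (x : ℂ))

/-- The Gauss sum `G(c, q; r) = Σ_{h ∈ (Z/qZ)^s} e((c·F(h) + h·r)/q)` attached to the
integral quadratic form `F(h) = (1/2) hᵀ A h`. -/
noncomputable def quadGaussSum (s : ℕ) (A : Matrix (Fin s) (Fin s) ℤ)
    (c : ℤ) (q : ℕ) (r : Fin s → ℤ) : ℂ :=
  ∑ h ∈ Fintype.piFinset (fun _ : Fin s => Finset.range q),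
    e (((((c : ℚ) * ((∑ i, ∑ j, (h i : ℚ) * (A i j : ℚ) * (h j : ℚ)) / 2)
      + ∑ i, (h i : ℚ) * (r i : ℚ)) / (q : ℚ) : ℚ) : ℝ))

/-- `K(ℓ,n,r;q) = Σ_{d ∈ (Z/qZ)ˣ} e((ℓd + n d̄)/q) G(-d̄, q; r)`. -/
noncomputable def Ksum (s : ℕ) (A : Matrix (Fin s) (Fin s) ℤ)
    (ℓ n : ℤ) (r : Fin s → ℤ) (q : ℕ) : ℂ :=
  ∑ d ∈ (Finset.range q).filter (fun d => Nat.Coprime d q),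
    e ((((ℓ * d + n * (((d : ZMod q)⁻¹).val : ℤ) : ℤ) : ℝ)) / q) *
      quadGaussSum s A (-(((d : ZMod q)⁻¹).val : ℤ)) q r

/-- The twisted factor `K^{(q')}(ℓ,n,r;q)
  = Σ_{d ∈ (Z/qZ)ˣ} e(q̄'(ℓd + n d̄)/q) G(-q̄' d̄, q; q̄' r)`,
where `q̄'` is the inverse of `q'` modulo `q`. -/
noncomputable def KsumTwist (s : ℕ) (A : Matrix (Fin s) (Fin s) ℤ)
    (ℓ n : ℤ) (r : Fin s → ℤ) (q' q : ℕ) : ℂ :=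
  ∑ d ∈ (Finset.range q).filter (fun d => Nat.Coprime d q),
    e (((((((q' : ZMod q)⁻¹).val : ℤ) * (ℓ * d + n * (((d : ZMod q)⁻¹).val : ℤ)) : ℤ) : ℝ)) / q) *
      quadGaussSum s A (-((((q' : ZMod q)⁻¹).val : ℤ) * (((d : ZMod q)⁻¹).val : ℤ))) q
        (fun i => ((((q' : ZMod q)⁻¹).val : ℤ)) * r i)

/-! ### Auxiliary machinery -/

/-- Normalized additive character `E a q = e(a/q)`. -/
noncomputable def EE (a : ℤ) (q : ℕ) : ℂ := e ((a : ℝ) / q)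

lemma e_add (x y : ℝ) : e (x + y) = e x * e y := by
  unfold e; rw [← Complex.exp_add]; push_cast; ring_nf

lemma e_intCast (m : ℤ) : e m = 1 := by
  unfold e
  rw [show (2 * (Real.pi : ℂ) * Complex.I * ((m : ℝ) : ℂ))
      = (m : ℂ) * (2 * Real.pi * Complex.I) by push_cast; ring]
  exact Complex.exp_int_mul_two_pi_mul_I m

lemma EE_add (a b : ℤ) (q : ℕ) : EE (a + b) q = EE a q * EE b q := by
  unfold EE; rw [← e_add]; congr 1; push_cast; ring

lemma EE_congr {a b : ℤ} {q : ℕ} (hq : 0 < q) (h : (a : ZMod q) = b) : EE a q = EE b q := by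
  have hd : (q : ℤ) ∣ a - b := by
    rwa [← ZMod.intCast_zmod_eq_zero_iff_dvd, Int.cast_sub, sub_eq_zero]
  obtain ⟨c, hc⟩ := hd
  have hab : a = b + q * c := by linarith
  subst hab
  unfold EE
  have hq' : (q : ℝ) ≠ 0 := Nat.cast_ne_zero.mpr hq.ne'
  rw [show (((b + q * c : ℤ) : ℝ) / q) = (b : ℝ)/q + (c : ℤ) by push_cast; field_simp,
    e_add, e_intCast, mul_one]

lemma EE_split (q₀ q₁ : ℕ) (h0 : 0 < q₀) (h1 : 0 < q₁) (hco : Nat.Coprime q₀ q₁) (a : ℤ) :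
    EE a (q₀ * q₁) =
      EE (((((q₁ : ZMod q₀)⁻¹).val : ℤ)) * a) q₀ * EE (((((q₀ : ZMod q₁)⁻¹).val : ℤ)) * a) q₁ := by
  set u₁ : ℤ := (((q₁ : ZMod q₀)⁻¹).val : ℤ) with hu1
  set u₀ : ℤ := (((q₀ : ZMod q₁)⁻¹).val : ℤ) with hu0
  haveI : NeZero q₀ := ⟨h0.ne'⟩
  haveI : NeZero q₁ := ⟨h1.ne'⟩
  have hq0 : (q₀ : ℝ) ≠ 0 := Nat.cast_ne_zero.mpr h0.ne'
  have hq1 : (q₁ : ℝ) ≠ 0 := Nat.cast_ne_zero.mpr h1.ne'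
  have key : EE (u₁ * a) q₀ * EE (u₀ * a) q₁ = EE ((u₁ * q₁ + u₀ * q₀) * a) (q₀ * q₁) := by
    unfold EE
    rw [← e_add]; congr 1; push_cast; field_simp
  rw [key]
  refine (EE_congr (Nat.mul_pos h0 h1) ?_).symm
  have h01 : ((u₁ * q₁ + u₀ * q₀ : ℤ) : ZMod (q₀ * q₁)) = 1 := by
    have hd0 : (q₀ : ℤ) ∣ (u₁ * q₁ + u₀ * q₀ - 1) := by
      have h1' : ((u₁ * q₁ - 1 : ℤ) : ZMod q₀) = 0 := by
        rw [hu1]; push_cast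
        rw [ZMod.natCast_val, ZMod.cast_id]
        have := ZMod.coe_mul_inv_eq_one (n := q₀) q₁ hco.symm
        rw [mul_comm] at this
        rw [this]; ring
      rw [ZMod.intCast_zmod_eq_zero_iff_dvd] at h1'
      have h2' : (q₀ : ℤ) ∣ u₀ * q₀ := dvd_mul_left _ _
      have := dvd_add h1' h2'
      rw [show u₁ * q₁ + u₀ * q₀ - 1 = u₁ * q₁ - 1 + u₀ * q₀ by ring]; exact this
    have hd1 : (q₁ : ℤ) ∣ (u₁ * q₁ + u₀ * q₀ - 1) := by
      have h1' : ((u₀ * q₀ - 1 : ℤ) : ZMod q₁) = 0 := by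
        rw [hu0]; push_cast
        rw [ZMod.natCast_val, ZMod.cast_id]
        have := ZMod.coe_mul_inv_eq_one (n := q₁) q₀ hco
        rw [mul_comm] at this
        rw [this]; ring
      rw [ZMod.intCast_zmod_eq_zero_iff_dvd] at h1'
      have h2' : (q₁ : ℤ) ∣ u₁ * q₁ := dvd_mul_left _ _
      have := dvd_add h1' h2'
      rw [show u₁ * q₁ + u₀ * q₀ - 1 = u₀ * q₀ - 1 + u₁ * q₁ by ring]; exact this
    have hcop : IsCoprime (q₀ : ℤ) (q₁ : ℤ) := by
      rw [Int.isCoprime_iff_gcd_eq_one]; exact_mod_cast hco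
    have := hcop.mul_dvd hd0 hd1
    have hdd : ((q₀ * q₁ : ℕ) : ℤ) ∣ (u₁ * q₁ + u₀ * q₀ - 1) := by push_cast; exact this
    calc ((u₁ * q₁ + u₀ * q₀ : ℤ) : ZMod (q₀ * q₁))
        = ((1 + (u₁ * q₁ + u₀ * q₀ - 1) : ℤ) : ZMod (q₀ * q₁)) := by norm_num
      _ = 1 := by
          obtain ⟨c, hc⟩ := hdd
          rw [hc]; push_cast
          rw [show ((q₀ : ZMod (q₀ * q₁)) * (q₁ : ZMod (q₀ * q₁)) * (c : ZMod (q₀*q₁)))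
              = ((q₀ * q₁ : ℕ) : ZMod (q₀*q₁)) * c by push_cast; ring,
            ZMod.natCast_self, zero_mul, add_zero]
  calc (((u₁ * q₁ + u₀ * q₀) * a : ℤ) : ZMod (q₀ * q₁))
      = ((u₁ * q₁ + u₀ * q₀ : ℤ) : ZMod (q₀ * q₁)) * a := by push_cast; ring
    _ = (a : ZMod (q₀ * q₁)) := by rw [h01, one_mul]

lemma inv_val_cast (q₀ q : ℕ) [NeZero q] (hdvd : q₀ ∣ q) (d : ℕ) (hd : Nat.Coprime d q) :
    (((((d : ZMod q)⁻¹).val : ℕ)) : ZMod q₀) = ((d : ZMod q₀))⁻¹ := by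
  have h1 : (d : ZMod q) * (d : ZMod q)⁻¹ = 1 := ZMod.coe_mul_inv_eq_one d hd
  have hcast : ((((d : ZMod q)⁻¹).val : ℕ) : ZMod q₀) =
      (ZMod.castHom hdvd (ZMod q₀)) ((d : ZMod q)⁻¹) := by
    rw [ZMod.natCast_val, ZMod.castHom_apply]
  have h2 : (d : ZMod q₀) * ((ZMod.castHom hdvd (ZMod q₀)) ((d : ZMod q)⁻¹)) = 1 := by
    have := congrArg (ZMod.castHom hdvd (ZMod q₀)) h1
    rwa [map_mul, map_natCast, map_one] at this
  have hd0 : Nat.Coprime d q₀ := Nat.Coprime.coprime_dvd_right hdvd hd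
  have h3 : (d : ZMod q₀) * (d : ZMod q₀)⁻¹ = 1 := ZMod.coe_mul_inv_eq_one d hd0
  rw [hcast]
  calc (ZMod.castHom hdvd (ZMod q₀)) ((d : ZMod q)⁻¹)
      = ((d : ZMod q₀)⁻¹ * (d : ZMod q₀)) * (ZMod.castHom hdvd (ZMod q₀)) ((d : ZMod q)⁻¹) := by
        rw [mul_comm ((d : ZMod q₀)⁻¹), h3, one_mul]
    _ = (d : ZMod q₀)⁻¹ * ((d : ZMod q₀) * (ZMod.castHom hdvd (ZMod q₀)) ((d : ZMod q)⁻¹)) := by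
        ring
    _ = (d : ZMod q₀)⁻¹ := by rw [h2, mul_one]

/-- The integral quadratic form `hᵀ A h`. -/
def Sq (s : ℕ) (A : Matrix (Fin s) (Fin s) ℤ) (f : Fin s → ℤ) : ℤ :=
  ∑ i, ∑ j, f i * A i j * f j

/-- `F(h) = (1/2) hᵀ A h`. -/
def Tq (s : ℕ) (A : Matrix (Fin s) (Fin s) ℤ) (f : Fin s → ℤ) : ℤ := Sq s A f / 2

variable {s : ℕ}

lemma Sq_even (A : Matrix (Fin s) (Fin s) ℤ) (hA : A.IsSymm) (hdiag : ∀ i, 2 ∣ A i i)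
    (f : Fin s → ℤ) : 2 ∣ Sq s A f := by
  have : ((Sq s A f : ℤ) : ZMod 2) = 0 := by
    unfold Sq
    push_cast
    rw [← Finset.sum_product']
    apply Finset.sum_involution (fun p _ => Prod.swap p)
    · intro p _
      have hsymm : A p.2 p.1 = A p.1 p.2 := by
        have hA' := hA; rw [Matrix.IsSymm] at hA'
        conv_lhs => rw [← hA']
        rfl
      simp only [Prod.swap]
      rw [hsymm]
      have htwo : ∀ x : ZMod 2, x + x = 0 := by decide
      calc ((f p.1 : ZMod 2) * (A p.1 p.2 : ZMod 2) * (f p.2 : ZMod 2))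
          + ((f p.2 : ZMod 2) * (A p.1 p.2 : ZMod 2) * (f p.1 : ZMod 2))
          = ((f p.1 : ZMod 2) * (A p.1 p.2 : ZMod 2) * (f p.2 : ZMod 2))
          + ((f p.1 : ZMod 2) * (A p.1 p.2 : ZMod 2) * (f p.2 : ZMod 2)) := by ring
        _ = 0 := htwo _
    · intro p _ hne
      intro hswap
      apply hne
      have hp : p.2 = p.1 := congrArg Prod.fst hswap
      have hz : (A p.1 p.2 : ZMod 2) = 0 := by
        rw [hp] at *
        rw [ZMod.intCast_zmod_eq_zero_iff_dvd]
        exact_mod_cast hdiag p.1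
      rw [hz]; ring
    · intro p _; exact Finset.mem_product.mpr ⟨Finset.mem_univ _, Finset.mem_univ _⟩
    · intro p _; rfl
  rwa [ZMod.intCast_zmod_eq_zero_iff_dvd] at this

lemma two_mul_Tq (A : Matrix (Fin s) (Fin s) ℤ) (hA : A.IsSymm) (hdiag : ∀ i, 2 ∣ A i i)
    (f : Fin s → ℤ) : 2 * Tq s A f = Sq s A f := by
  obtain ⟨a, ha⟩ := Sq_even A hA hdiag f
  rw [Tq, ha]; omega

lemma Tq_mod (A : Matrix (Fin s) (Fin s) ℤ) (hA : A.IsSymm) (hdiag : ∀ i, 2 ∣ A i i)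
    (q : ℤ) (f g : Fin s → ℤ) (h : ∀ i, q ∣ f i - g i) :
    q ∣ Tq s A f - Tq s A g := by
  have h' : ∀ i, ∃ c, f i - g i = q * c := fun i => (h i)
  choose k hk using h'
  have hf : f = fun i => g i + q * k i := funext fun i => by linarith [hk i]
  have expand : Sq s A f = Sq s A g + q * (∑ i, ∑ j, k i * A i j * g j)
      + q * (∑ i, ∑ j, g i * A i j * k j) + q ^ 2 * Sq s A k := by
    rw [hf]; unfold Sq
    simp only [← Finset.sum_product']
    rw [Finset.mul_sum, Finset.mul_sum, Finset.mul_sum, ← Finset.sum_add_distrib,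
      ← Finset.sum_add_distrib, ← Finset.sum_add_distrib]
    apply Finset.sum_congr rfl; intro p _; ring
  have swap : ∑ i, ∑ j, g i * A i j * k j = ∑ i, ∑ j, k i * A i j * g j := by
    rw [Finset.sum_comm]
    apply Finset.sum_congr rfl; intro i _
    apply Finset.sum_congr rfl; intro j _
    have hsymm : A j i = A i j := by
      conv_lhs => rw [← hA]
      rfl
    rw [hsymm]; ring
  obtain ⟨m, hm⟩ := Sq_even A hA hdiag k
  set C := ∑ i, ∑ j, k i * A i j * g j
  have key : 2 * (Tq s A f - Tq s A g) = 2 * (q * (C + q * m)) := by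
    rw [mul_sub, two_mul_Tq A hA hdiag, two_mul_Tq A hA hdiag, expand, swap, hm]; ring
  have hfin : Tq s A f - Tq s A g = q * (C + q * m) := by omega
  exact ⟨C + q * m, hfin⟩

lemma quadGaussSum_eq (A : Matrix (Fin s) (Fin s) ℤ) (hA : A.IsSymm)
    (hdiag : ∀ i, 2 ∣ A i i) (c : ℤ) (q : ℕ) (r : Fin s → ℤ) :
    quadGaussSum s A c q r = ∑ h ∈ Fintype.piFinset (fun _ : Fin s => Finset.range q),
      EE (c * Tq s A (fun i => (h i : ℤ)) + ∑ i, (h i : ℤ) * r i) q := by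
  apply Finset.sum_congr rfl
  intro h _
  set f : Fin s → ℤ := fun i => (h i : ℤ) with hfdef
  obtain ⟨m, hm⟩ := Sq_even A hA hdiag f
  have hT : Tq s A f = m := by rw [Tq, hm]; omega
  have hSq : (∑ i, ∑ j, (h i : ℚ) * (A i j : ℚ) * (h j : ℚ)) = ((Sq s A f : ℤ) : ℚ) := by
    rw [Sq]; push_cast; rfl
  have harg : (((c : ℚ) * ((∑ i, ∑ j, (h i : ℚ) * (A i j : ℚ) * (h j : ℚ)) / 2)
      + ∑ i, (h i : ℚ) * (r i : ℚ)) / (q : ℚ))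
      = ((c * Tq s A f + ∑ i, f i * r i : ℤ) : ℚ) / (q : ℚ) := by
    rw [hSq, hm, hT]
    simp only [hfdef]
    push_cast
    ring
  rw [harg, EE]
  congr 1
  simp only [hfdef]
  push_cast
  ring

lemma Ksum_expand (A : Matrix (Fin s) (Fin s) ℤ) (hA : A.IsSymm) (hdiag : ∀ i, 2 ∣ A i i)
    (ℓ n : ℤ) (r : Fin s → ℤ) (q : ℕ) :
    Ksum s A ℓ n r q = ∑ d ∈ (Finset.range q).filter (fun d => Nat.Coprime d q),
      ∑ h ∈ Fintype.piFinset (fun _ : Fin s => Finset.range q),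
        EE (ℓ * d + n * (((d : ZMod q)⁻¹).val : ℤ)
          + (-(((d : ZMod q)⁻¹).val : ℤ) * Tq s A (fun i => (h i : ℤ))
            + ∑ i, (h i : ℤ) * r i)) q := by
  unfold Ksum
  refine Finset.sum_congr rfl fun d _ => ?_
  rw [quadGaussSum_eq A hA hdiag, Finset.mul_sum]
  refine Finset.sum_congr rfl fun h _ => ?_
  conv_rhs => rw [EE_add]
  rfl

lemma KsumTwist_expand (A : Matrix (Fin s) (Fin s) ℤ) (hA : A.IsSymm) (hdiag : ∀ i, 2 ∣ A i i)
    (ℓ n : ℤ) (r : Fin s → ℤ) (q' q : ℕ) :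
    KsumTwist s A ℓ n r q' q = ∑ d ∈ (Finset.range q).filter (fun d => Nat.Coprime d q),
      ∑ h ∈ Fintype.piFinset (fun _ : Fin s => Finset.range q),
        EE ((((q' : ZMod q)⁻¹).val : ℤ) * (ℓ * d + n * (((d : ZMod q)⁻¹).val : ℤ)
          + (-(((d : ZMod q)⁻¹).val : ℤ) * Tq s A (fun i => (h i : ℤ))
            + ∑ i, (h i : ℤ) * r i))) q := by
  unfold KsumTwist
  refine Finset.sum_congr rfl fun d _ => ?_
  rw [quadGaussSum_eq A hA hdiag, Finset.mul_sum]
  refine Finset.sum_congr rfl fun h _ => ?_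
  set u : ℤ := (((q' : ZMod q)⁻¹).val : ℤ) with hu
  set v : ℤ := (((d : ZMod q)⁻¹).val : ℤ) with hv
  have hsum : ∑ i, (h i : ℤ) * (u * r i) = u * ∑ i, (h i : ℤ) * r i := by
    rw [Finset.mul_sum]; exact Finset.sum_congr rfl fun i _ => by ring
  rw [show u * (ℓ * (d : ℤ) + n * v + (-v * Tq s A (fun i => (h i : ℤ)) + ∑ i, (h i : ℤ) * r i))
      = u * (ℓ * (d : ℤ) + n * v)
        + (-(u * v) * Tq s A (fun i => (h i : ℤ)) + ∑ i, (h i : ℤ) * (u * r i)) by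
    rw [hsum]; ring]
  conv_rhs => rw [EE_add]
  rfl

lemma term_reduce (A : Matrix (Fin s) (Fin s) ℤ) (hA : A.IsSymm) (hdiag : ∀ i, 2 ∣ A i i)
    (q₀ q : ℕ) [NeZero q] (h0 : 0 < q₀) (hdvd : q₀ ∣ q)
    (ℓ n : ℤ) (r : Fin s → ℤ) (u : ℤ) (d : ℕ) (hd : Nat.Coprime d q) (h : Fin s → ℕ) :
    EE (u * (ℓ * d + n * (((d : ZMod q)⁻¹).val : ℤ)
      + (-(((d : ZMod q)⁻¹).val : ℤ) * Tq s A (fun i => (h i : ℤ))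
        + ∑ i, (h i : ℤ) * r i))) q₀
    = EE (u * (ℓ * ((d % q₀ : ℕ) : ℤ) + n * ((((d % q₀ : ℕ) : ZMod q₀)⁻¹).val : ℤ)
      + (-((((d % q₀ : ℕ) : ZMod q₀)⁻¹).val : ℤ) * Tq s A (fun i => ((h i % q₀ : ℕ) : ℤ))
        + ∑ i, ((h i % q₀ : ℕ) : ℤ) * r i))) q₀ := by
  haveI : NeZero q₀ := ⟨h0.ne'⟩
  apply EE_congr h0
  have hdq0 : Nat.Coprime d q₀ := Nat.Coprime.coprime_dvd_right hdvd hd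
  have hd0 : Nat.Coprime (d % q₀) q₀ := by
    unfold Nat.Coprime at *
    rw [(Nat.mod_modEq d q₀).gcd_eq]; exact hdq0
  have a2 : ((((d : ZMod q)⁻¹).val : ℕ) : ZMod q₀)
      = ((((d : ZMod q₀)⁻¹).val : ℕ) : ZMod q₀) := by
    rw [inv_val_cast q₀ q hdvd d hd, inv_val_cast q₀ q₀ dvd_rfl d hdq0]
  have a3 : ((Tq s A (fun i => (h i : ℤ)) : ℤ) : ZMod q₀)
      = ((Tq s A (fun i => (h i : ℤ) % (q₀ : ℤ)) : ℤ) : ZMod q₀) := by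
    have hdvdT : (q₀ : ℤ) ∣ Tq s A (fun i => (h i : ℤ)) - Tq s A (fun i => (h i : ℤ) % (q₀ : ℤ)) := by
      apply Tq_mod A hA hdiag
      intro i
      have hdm := Int.mul_ediv_add_emod (h i : ℤ) (q₀ : ℤ)
      exact ⟨(h i : ℤ) / q₀, by linarith⟩
    rw [← sub_eq_zero, ← Int.cast_sub, ZMod.intCast_zmod_eq_zero_iff_dvd]; exact hdvdT
  push_cast
  simp only [ZMod.natCast_mod]
  rw [a3, a2]

section CRTfun
set_option linter.unusedSectionVars false
variable (q₀ q₁ : ℕ) (hco : Nat.Coprime q₀ q₁) [NeZero q₀] [NeZero q₁]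

noncomputable def crt (x y : ℕ) : ℕ :=
  ((ZMod.chineseRemainder hco).symm ((x : ZMod q₀), (y : ZMod q₁))).val

lemma crt_lt (x y : ℕ) : crt q₀ q₁ hco x y < q₀ * q₁ := ZMod.val_lt _

lemma forward_natCast (m : ℕ) :
    (ZMod.chineseRemainder hco) (m : ZMod (q₀ * q₁)) = ((m : ZMod q₀), (m : ZMod q₁)) := by
  simp [Prod.ext_iff]

lemma crt_cast (x y : ℕ) :
    ((crt q₀ q₁ hco x y : ℕ) : ZMod q₀) = (x : ZMod q₀) ∧
    ((crt q₀ q₁ hco x y : ℕ) : ZMod q₁) = (y : ZMod q₁) := by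
  set z := (ZMod.chineseRemainder hco).symm ((x : ZMod q₀), (y : ZMod q₁)) with hz
  have hval : ((z.val : ℕ) : ZMod (q₀ * q₁)) = z := ZMod.natCast_zmod_val z
  have h1 : (ZMod.chineseRemainder hco) ((z.val : ℕ) : ZMod (q₀ * q₁))
      = ((x : ZMod q₀), (y : ZMod q₁)) := by
    rw [hval, hz, RingEquiv.apply_symm_apply]
  rw [forward_natCast] at h1
  exact ⟨congrArg Prod.fst h1, congrArg Prod.snd h1⟩

lemma crt_left_inv (d : ℕ) (hd : d < q₀ * q₁) : crt q₀ q₁ hco (d % q₀) (d % q₁) = d := by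
  unfold crt
  rw [ZMod.natCast_mod, ZMod.natCast_mod, ← forward_natCast q₀ q₁ hco d,
    RingEquiv.symm_apply_apply, ZMod.val_natCast, Nat.mod_eq_of_lt hd]

lemma crt_mod_left (x y : ℕ) (hx : x < q₀) : crt q₀ q₁ hco x y % q₀ = x := by
  have hmm := (crt_cast q₀ q₁ hco x y).1
  rw [ZMod.natCast_eq_natCast_iff] at hmm
  calc crt q₀ q₁ hco x y % q₀ = x % q₀ := hmm
    _ = x := Nat.mod_eq_of_lt hx

lemma crt_mod_right (x y : ℕ) (hy : y < q₁) : crt q₀ q₁ hco x y % q₁ = y := by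
  have hmm := (crt_cast q₀ q₁ hco x y).2
  rw [ZMod.natCast_eq_natCast_iff] at hmm
  calc crt q₀ q₁ hco x y % q₁ = y % q₁ := hmm
    _ = y := Nat.mod_eq_of_lt hy

lemma crt_coprime (x y : ℕ) (hx : Nat.Coprime x q₀) (hy : Nat.Coprime y q₁) :
    Nat.Coprime (crt q₀ q₁ hco x y) (q₀ * q₁) := by
  have hc0 : Nat.Coprime (crt q₀ q₁ hco x y) q₀ := by
    have hmm := (crt_cast q₀ q₁ hco x y).1
    rw [ZMod.natCast_eq_natCast_iff] at hmm
    unfold Nat.Coprime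
    rw [hmm.gcd_eq]; exact hx
  have hc1 : Nat.Coprime (crt q₀ q₁ hco x y) q₁ := by
    have hmm := (crt_cast q₀ q₁ hco x y).2
    rw [ZMod.natCast_eq_natCast_iff] at hmm
    unfold Nat.Coprime
    rw [hmm.gcd_eq]; exact hy
  exact Nat.Coprime.mul_right hc0 hc1
end CRTfun

/-- Chinese-remainder factorization of the complete sum `K`:
for coprime `q₀, q₁`, `K(ℓ,n,r;q₀q₁) = K^{(q₁)}(ℓ,n,r;q₀) · K^{(q₀)}(ℓ,n,r;q₁)`. -/
theorem Ksum_factorization (s : ℕ) (A : Matrix (Fin s) (Fin s) ℤ) (hA : A.IsSymm)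
    (hdiag : ∀ i, 2 ∣ A i i) (q₀ q₁ : ℕ) (h0 : 0 < q₀) (h1 : 0 < q₁)
    (hco : Nat.Coprime q₀ q₁) (ℓ n : ℤ) (r : Fin s → ℤ) :
    Ksum s A ℓ n r (q₀ * q₁) = KsumTwist s A ℓ n r q₁ q₀ * KsumTwist s A ℓ n r q₀ q₁ := by
  classical
  haveI : NeZero q₀ := ⟨h0.ne'⟩
  haveI : NeZero q₁ := ⟨h1.ne'⟩
  haveI : NeZero (q₀ * q₁) := ⟨Nat.mul_ne_zero h0.ne' h1.ne'⟩
  rw [Ksum_expand A hA hdiag, KsumTwist_expand A hA hdiag, KsumTwist_expand A hA hdiag]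
  have LHS_eq : (∑ d ∈ (Finset.range (q₀ * q₁)).filter (fun d => Nat.Coprime d (q₀ * q₁)),
      ∑ h ∈ Fintype.piFinset (fun _ : Fin s => Finset.range (q₀ * q₁)),
        EE (ℓ * d + n * (((d : ZMod (q₀ * q₁))⁻¹).val : ℤ)
          + (-(((d : ZMod (q₀ * q₁))⁻¹).val : ℤ) * Tq s A (fun i => (h i : ℤ))
            + ∑ i, (h i : ℤ) * r i)) (q₀ * q₁))
      = ∑ d ∈ (Finset.range (q₀ * q₁)).filter (fun d => Nat.Coprime d (q₀ * q₁)),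
        ∑ h ∈ Fintype.piFinset (fun _ : Fin s => Finset.range (q₀ * q₁)),
        (EE ((((q₁ : ZMod q₀)⁻¹).val : ℤ) * (ℓ * ((d % q₀ : ℕ) : ℤ)
            + n * ((((d % q₀ : ℕ) : ZMod q₀)⁻¹).val : ℤ)
            + (-((((d % q₀ : ℕ) : ZMod q₀)⁻¹).val : ℤ) * Tq s A (fun i => ((h i % q₀ : ℕ) : ℤ))
              + ∑ i, ((h i % q₀ : ℕ) : ℤ) * r i))) q₀)
        * (EE ((((q₀ : ZMod q₁)⁻¹).val : ℤ) * (ℓ * ((d % q₁ : ℕ) : ℤ)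
            + n * ((((d % q₁ : ℕ) : ZMod q₁)⁻¹).val : ℤ)
            + (-((((d % q₁ : ℕ) : ZMod q₁)⁻¹).val : ℤ) * Tq s A (fun i => ((h i % q₁ : ℕ) : ℤ))
              + ∑ i, ((h i % q₁ : ℕ) : ℤ) * r i))) q₁) := by
    refine Finset.sum_congr rfl fun d hd => Finset.sum_congr rfl fun h _ => ?_
    have hdco : Nat.Coprime d (q₀ * q₁) := (Finset.mem_filter.mp hd).2
    rw [EE_split q₀ q₁ h0 h1 hco]
    congr 1
    · exact term_reduce A hA hdiag q₀ (q₀ * q₁) h0 (dvd_mul_right _ _) ℓ n r _ d hdco h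
    · exact term_reduce A hA hdiag q₁ (q₀ * q₁) h1 (dvd_mul_left _ _) ℓ n r _ d hdco h
  rw [LHS_eq]
  rw [← Finset.sum_product', ← Finset.sum_product', ← Finset.sum_product',
    Finset.sum_mul_sum, ← Finset.sum_product']
  refine Finset.sum_nbij'
    (i := fun p => ((p.1 % q₀, fun k => p.2 k % q₀), (p.1 % q₁, fun k => p.2 k % q₁)))
    (j := fun P => (crt q₀ q₁ hco P.1.1 P.2.1, fun k => crt q₀ q₁ hco (P.1.2 k) (P.2.2 k)))
    ?_ ?_ ?_ ?_ ?_
  · intro p hp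
    obtain ⟨hp1, hp2⟩ := Finset.mem_product.mp hp
    obtain ⟨hplt, hpco⟩ := Finset.mem_filter.mp hp1
    rw [Finset.mem_range] at hplt
    have hco0 : Nat.Coprime (p.1 % q₀) q₀ := by
      unfold Nat.Coprime
      rw [(Nat.mod_modEq p.1 q₀).gcd_eq]
      exact Nat.Coprime.coprime_dvd_right (dvd_mul_right _ _) hpco
    have hco1 : Nat.Coprime (p.1 % q₁) q₁ := by
      unfold Nat.Coprime
      rw [(Nat.mod_modEq p.1 q₁).gcd_eq]
      exact Nat.Coprime.coprime_dvd_right (dvd_mul_left _ _) hpco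
    refine Finset.mem_product.mpr ⟨Finset.mem_product.mpr ⟨?_, ?_⟩,
      Finset.mem_product.mpr ⟨?_, ?_⟩⟩
    · exact Finset.mem_filter.mpr ⟨Finset.mem_range.mpr (Nat.mod_lt _ h0), hco0⟩
    · exact Fintype.mem_piFinset.mpr fun i => Finset.mem_range.mpr (Nat.mod_lt _ h0)
    · exact Finset.mem_filter.mpr ⟨Finset.mem_range.mpr (Nat.mod_lt _ h1), hco1⟩
    · exact Fintype.mem_piFinset.mpr fun i => Finset.mem_range.mpr (Nat.mod_lt _ h1)
  · intro P hP
    obtain ⟨hP0, hP1⟩ := Finset.mem_product.mp hP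
    obtain ⟨hP00, hP01⟩ := Finset.mem_product.mp hP0
    obtain ⟨hP10, hP11⟩ := Finset.mem_product.mp hP1
    obtain ⟨_, hco00⟩ := Finset.mem_filter.mp hP00
    obtain ⟨_, hco10⟩ := Finset.mem_filter.mp hP10
    refine Finset.mem_product.mpr ⟨?_, ?_⟩
    · exact Finset.mem_filter.mpr ⟨Finset.mem_range.mpr (crt_lt q₀ q₁ hco _ _),
        crt_coprime q₀ q₁ hco _ _ hco00 hco10⟩
    · exact Fintype.mem_piFinset.mpr fun i => Finset.mem_range.mpr (crt_lt q₀ q₁ hco _ _)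
  · intro p hp
    obtain ⟨hp1, hp2⟩ := Finset.mem_product.mp hp
    obtain ⟨hplt, _⟩ := Finset.mem_filter.mp hp1
    rw [Finset.mem_range] at hplt
    have hh := Fintype.mem_piFinset.mp hp2
    refine Prod.ext ?_ ?_
    · exact crt_left_inv q₀ q₁ hco _ hplt
    · funext k
      exact crt_left_inv q₀ q₁ hco _ (Finset.mem_range.mp (hh k))
  · intro P hP
    obtain ⟨hP0, hP1⟩ := Finset.mem_product.mp hP
    obtain ⟨hP00, hP01⟩ := Finset.mem_product.mp hP0
    obtain ⟨hP10, hP11⟩ := Finset.mem_product.mp hP1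
    obtain ⟨hlt00, _⟩ := Finset.mem_filter.mp hP00
    obtain ⟨hlt10, _⟩ := Finset.mem_filter.mp hP10
    rw [Finset.mem_range] at hlt00 hlt10
    have hh0 := Fintype.mem_piFinset.mp hP01
    have hh1 := Fintype.mem_piFinset.mp hP11
    refine Prod.ext (Prod.ext ?_ ?_) (Prod.ext ?_ ?_)
    · exact crt_mod_left q₀ q₁ hco _ _ hlt00
    · funext k; exact crt_mod_left q₀ q₁ hco _ _ (Finset.mem_range.mp (hh0 k))
    · exact crt_mod_right q₀ q₁ hco _ _ hlt10
    · funext k; exact crt_mod_right q₀ q₁ hco _ _ (Finset.mem_range.mp (hh1 k))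
  · intro p _
    rfl
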